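/- Let σ(x) = 1/(1+exp(-x)) and ψ(x) = tanh(x), and define HTAF(x | α₀, α₁) = σ(α₁ ψ(α₀ x)). For any ε ∈ (0, 1/2), if α₁ > log((1-ε)/ε) and α₀ ≥ (1/(2ε)) · log( (α₁ + log((1-ε)/ε)) / (α₁ - log((1-ε)/ε)) ), then for all x ≤ -ε, |HTAF(x | α₀, α₁)| ≤ ε. -/

import Mathlib

noncomputable def sigmoid (x : ℝ) : ℝ := 1 / (1 + Real.exp (-x))

noncomputable def HTAF (α₀ α₁ x : ℝ) : ℝ := sigmoid (α₁ * Real.tanh (α₀ * x))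

lemma tanh_formula (x : ℝ) : Real.tanh x = 1 - 2 / (Real.exp (2 * x) + 1) := by
  rw [Real.tanh_eq_sinh_div_cosh, Real.sinh_eq, Real.cosh_eq]
  have h1 : Real.exp x > 0 := Real.exp_pos x
  have h2 : Real.exp (-x) > 0 := Real.exp_pos _
  have h3 : Real.exp (2 * x) = Real.exp x * Real.exp x := by
    rw [two_mul, Real.exp_add]
  have h4 : Real.exp (-x) = 1 / Real.exp x := by
    rw [Real.exp_neg]; ring
  field_simp [h3, h4]
  rw [h4, show x * 2 = 2 * x by ring, h3]
  field_simp
  ring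

lemma tanh_mono {a b : ℝ} (h : a ≤ b) : Real.tanh a ≤ Real.tanh b := by
  rw [tanh_formula, tanh_formula]
  have h1 : Real.exp (2 * a) + 1 ≤ Real.exp (2 * b) + 1 := by
    have := Real.exp_le_exp.2 (by linarith : 2 * a ≤ 2 * b); linarith
  have h2 : (0:ℝ) < Real.exp (2 * a) + 1 := by positivity
  have := div_le_div_of_nonneg_left (by norm_num : (0:ℝ) ≤ 2) h2 h1
  linarith

theorem stmt_1 (ε α₀ α₁ : ℝ) (hε : ε ∈ Set.Ioo (0:ℝ) (1/2))
    (hα₁ : α₁ > Real.log ((1 - ε) / ε))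
    (hα₀ : α₀ ≥ (1 / (2 * ε)) *
      Real.log ((α₁ + Real.log ((1 - ε) / ε)) / (α₁ - Real.log ((1 - ε) / ε)))) :
    ∀ x : ℝ, x ≤ -ε → |HTAF α₀ α₁ x| ≤ ε := by
  obtain ⟨hε0, hε2⟩ := hε
  set L := Real.log ((1 - ε) / ε) with hL
  have hratio : (1 - ε) / ε > 1 := by
    rw [gt_iff_lt, lt_div_iff₀ hε0]; linarith
  have hL0 : 0 < L := Real.log_pos hratio
  have hα₁0 : 0 < α₁ := lt_trans hL0 hα₁
  have hRpos : 0 < (α₁ + L) / (α₁ - L) := by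
    apply div_pos <;> linarith
  -- key: tanh (α₀ * ε) ≥ L / α₁
  have hkey : L / α₁ ≤ Real.tanh (α₀ * ε) := by
    have h2ae : Real.log ((α₁ + L) / (α₁ - L)) ≤ 2 * (α₀ * ε) := by
      have h := mul_le_mul_of_nonneg_left hα₀ (by positivity : (0:ℝ) ≤ 2 * ε)
      have he : (2 * ε) * ((1 / (2 * ε)) * Real.log ((α₁ + L) / (α₁ - L)))
          = Real.log ((α₁ + L) / (α₁ - L)) := by
        field_simp
      linarith
    have hexp : (α₁ + L) / (α₁ - L) ≤ Real.exp (2 * (α₀ * ε)) := by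
      calc (α₁ + L) / (α₁ - L) = Real.exp (Real.log ((α₁ + L) / (α₁ - L))) :=
            (Real.exp_log hRpos).symm
        _ ≤ _ := Real.exp_le_exp.2 h2ae
    rw [tanh_formula]
    have hE : 0 < Real.exp (2 * (α₀ * ε)) + 1 := by positivity
    have h1 : 2 / (Real.exp (2 * (α₀ * ε)) + 1) ≤ 2 / ((α₁ + L) / (α₁ - L) + 1) := by
      apply div_le_div_of_nonneg_left (by norm_num) (by linarith) (by linarith)
    have h2 : 2 / ((α₁ + L) / (α₁ - L) + 1) = 1 - L / α₁ := by
      have hne : α₁ - L ≠ 0 := by linarith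
      have hα1ne : α₁ ≠ 0 := ne_of_gt hα₁0
      rw [div_add_one hne, div_div_eq_mul_div, eq_sub_iff_add_eq, div_add_div _ _ (by linarith) hα1ne, div_eq_one_iff_eq (by positivity)]
      ring
    linarith
  intro x hx
  have hα₀pos : 0 < α₀ := by
    have hlogpos : 0 < Real.log ((α₁ + L) / (α₁ - L)) := by
      apply Real.log_pos
      rw [lt_div_iff₀ (by linarith : (0:ℝ) < α₁ - L)]; linarith
    have : 0 < (1 / (2 * ε)) * Real.log ((α₁ + L) / (α₁ - L)) := by positivity
    linarith
  -- tanh (α₀ * x) ≤ - (L / α₁)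
  have htx : Real.tanh (α₀ * x) ≤ -(L / α₁) := by
    have h1 : α₀ * x ≤ -(α₀ * ε) := by nlinarith
    have h2 : Real.tanh (α₀ * x) ≤ Real.tanh (-(α₀ * ε)) := tanh_mono h1
    rw [Real.tanh_neg] at h2
    linarith
  have hy : α₁ * Real.tanh (α₀ * x) ≤ -L := by
    have := mul_le_mul_of_nonneg_left htx (le_of_lt hα₁0)
    have hL' : α₁ * -(L / α₁) = -L := by field_simp
    linarith [hL' ▸ this]
  -- sigmoid bound
  have hexpL : (1 - ε) / ε ≤ Real.exp (-(α₁ * Real.tanh (α₀ * x))) := by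
    calc (1 - ε) / ε = Real.exp L := (Real.exp_log (by positivity)).symm
      _ ≤ _ := Real.exp_le_exp.2 (by linarith)
  have hpos : 0 < 1 + Real.exp (-(α₁ * Real.tanh (α₀ * x))) := by positivity
  have hs : HTAF α₀ α₁ x ≤ ε := by
    unfold HTAF sigmoid
    rw [div_le_iff₀ hpos]
    have : (1 - ε) / ε * ε = 1 - ε := by field_simp
    nlinarith
  have hnn : 0 ≤ HTAF α₀ α₁ x := by
    unfold HTAF sigmoid
    positivity
  rw [abs_of_nonneg hnn]
  exact hs
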